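/- Let B₁ be a real n_V × n_E matrix and B₂ a real n_E × n_T matrix, x ∈ ℝ^{n_E}, α ∈ ℝ, and suppose B₂ᵀ x = 0 and every entry of B₁ x differs from α by an integer multiple of 2π. Then the Fréchet derivative of the map θ ↦ −B₂ sin(B₂ᵀ θ) − B₁ᵀ sin(B₁ θ) at x is the linear map z ↦ −(B₂ B₂ᵀ + cos(α) · B₁ᵀ B₁) z; moreover, if cos(α) > 0, this linearization is negative semidefinite: zᵀ (B₂ B₂ᵀ + cos(α) B₁ᵀ B₁) z ≥ 0 for all z ∈ ℝ^{n_E}. -/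

import Mathlib

open Matrix BigOperators

lemma sin_comp_mulVec_hasFDerivAt {m n : ℕ} (M : Matrix (Fin m) (Fin n) ℝ) (x : Fin n → ℝ) :
    HasFDerivAt (fun θ : Fin n → ℝ => fun i => Real.sin (M.mulVec θ i))
      (LinearMap.toContinuousLinearMap
        ((Matrix.diagonal (fun i => Real.cos (M.mulVec x i)) * M).mulVecLin)) x := by
  rw [hasFDerivAt_pi']
  intro i
  have hlin : HasFDerivAt (fun θ : Fin n → ℝ => M.mulVec θ i)
      (LinearMap.toContinuousLinearMap ((LinearMap.proj i).comp M.mulVecLin)) x :=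
    (LinearMap.toContinuousLinearMap ((LinearMap.proj i).comp M.mulVecLin)).hasFDerivAt
  have h := (Real.hasDerivAt_sin (M.mulVec x i)).comp_hasFDerivAt x hlin
  refine h.congr_fderiv ?_
  ext z
  simp [Matrix.mulVec, Matrix.diagonal, Matrix.mul_apply, dotProduct, Finset.mul_sum,
    Matrix.mulVecLin]
  exact Finset.sum_congr rfl fun j _ => by ring

/-- If `B₂ᵀx = 0` and every entry of `B₁x` differs from `α` by an integer
multiple of `2π`, then the Fréchet derivative of the homogeneous sine edge flow
`θ ↦ −B₂ sin(B₂ᵀθ) − B₁ᵀ sin(B₁θ)` at `x` is the linear map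
`z ↦ −(B₂B₂ᵀ + cos(α)·B₁ᵀB₁) z`; moreover, if `cos α > 0`, this linearization is negative
semidefinite: `zᵀ(B₂B₂ᵀ + cos(α)B₁ᵀB₁)z ≥ 0` for all `z`. -/
theorem linearization_of_sine_edge_flow_at_twist_like
    (nV nE nT : ℕ)
    (B1 : Matrix (Fin nV) (Fin nE) ℝ) (B2 : Matrix (Fin nE) (Fin nT) ℝ)
    (x : Fin nE → ℝ) (α : ℝ)
    (hx2 : B2.transpose.mulVec x = 0)
    (hx1 : ∀ i, ∃ k : ℤ, B1.mulVec x i = α + 2 * Real.pi * (k : ℝ)) :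
    HasFDerivAt
        (fun θ : Fin nE → ℝ =>
          -(B2.mulVec fun τ => Real.sin (B2.transpose.mulVec θ τ))
            - B1.transpose.mulVec fun v => Real.sin (B1.mulVec θ v))
        (LinearMap.toContinuousLinearMap
          (Matrix.mulVecLin (-(B2 * B2.transpose + Real.cos α • (B1.transpose * B1))))) x
      ∧ (0 < Real.cos α →
          ∀ z : Fin nE → ℝ,
            0 ≤ z ⬝ᵥ ((B2 * B2.transpose + Real.cos α • (B1.transpose * B1)).mulVec z)) := by
  constructor
  · have h2 := sin_comp_mulVec_hasFDerivAt B2.transpose x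
    have h1 := sin_comp_mulVec_hasFDerivAt B1 x
    have hd2 : Matrix.diagonal (fun i => Real.cos (B2.transpose.mulVec x i)) = 1 := by
      rw [hx2]; simp [Matrix.diagonal_one]
    have hd1 : Matrix.diagonal (fun i => Real.cos (B1.mulVec x i))
        = Real.cos α • (1 : Matrix (Fin nV) (Fin nV) ℝ) := by
      ext i j
      obtain ⟨k, hk⟩ := hx1 i
      by_cases hij : i = j
      · subst hij
        simp only [Matrix.diagonal_apply_eq, Matrix.smul_apply, Matrix.one_apply_eq,
          smul_eq_mul, mul_one, hk]
        rw [show α + 2 * Real.pi * (k:ℝ) = α + (k:ℝ) * (2 * Real.pi) by ring,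
          Real.cos_add_int_mul_two_pi]
      · simp [Matrix.diagonal, hij]
    rw [hd2] at h2
    rw [hd1] at h1
    have hA := ((B2.mulVecLin.toContinuousLinearMap).hasFDerivAt).comp x h2
    have hB := ((B1.transpose.mulVecLin.toContinuousLinearMap).hasFDerivAt).comp x h1
    have h := (hA.neg).sub hB
    refine h.congr_fderiv ?_
    refine ContinuousLinearMap.ext fun z => ?_
    simp only [LinearMap.coe_toContinuousLinearMap', Matrix.mulVecLin_apply,
      ContinuousLinearMap.coe_sub', ContinuousLinearMap.neg_apply, Pi.sub_apply,
      ContinuousLinearMap.coe_comp', Function.comp_apply, one_mul, Matrix.smul_mul,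
      Matrix.neg_mulVec, Matrix.add_mulVec, Matrix.smul_mulVec, Matrix.mulVec_mulVec,
      Matrix.mulVec_smul, Matrix.one_mul, one_mul]
    abel
  · intro hc z
    have p2 := (Matrix.posSemidef_self_mul_conjTranspose B2).dotProduct_mulVec_nonneg z
    have p1 := (Matrix.posSemidef_conjTranspose_mul_self B1).dotProduct_mulVec_nonneg z
    simp only [Matrix.conjTranspose_eq_transpose_of_trivial] at p2 p1
    rw [Matrix.add_mulVec, dotProduct_add, Matrix.smul_mulVec, dotProduct_smul,
      smul_eq_mul]
    have : (0:ℝ) ≤ z ⬝ᵥ (B2 * B2.transpose).mulVec z := by simpa using p2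
    have h1' : (0:ℝ) ≤ z ⬝ᵥ (B1.transpose * B1).mulVec z := by simpa using p1
    nlinarith [mul_nonneg hc.le h1']
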